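/- Let 𝒜 be an epireflective class of topological spaces in which every member is a T0 space and which contains a space with at least two points, and let ℬ be a hereditary AD-class in 𝒜. If ℬ contains at least one prime space, then ℬ is closed under prime factors: X_a ∈ ℬ for every X ∈ ℬ and every a ∈ X. -/

import Mathlib

open Topology

universe u v w

/-- A class of topological spaces (underlying types in a fixed universe). -/
def SpaceClass : Type (u + 1) :=
  ∀ (X : Type u), TopologicalSpace X → Prop

/-- Closedness under homeomorphic copies. -/
def ClosedUnderHomeo (ℬ : SpaceClass.{u}) : Prop :=
  ∀ (X Y : Type u) (tX : TopologicalSpace X) (tY : TopologicalSpace Y),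
    Nonempty (@Homeomorph X Y tX tY) → ℬ X tX → ℬ Y tY

/-- An epireflective class: closed under homeomorphic copies, subspaces and
set-indexed topological products. -/
structure IsEpireflectiveClass (𝒜 : SpaceClass.{u}) : Prop where
  homeo : ClosedUnderHomeo 𝒜
  subspace : ∀ (X : Type u) (tX : TopologicalSpace X) (s : Set X),
    𝒜 X tX → 𝒜 s (TopologicalSpace.induced (Subtype.val : s → X) tX)
  prod : ∀ (ι : Type u) (Y : ι → Type u) (t : ∀ i, TopologicalSpace (Y i)),
    (∀ i, 𝒜 (Y i) (t i)) → 𝒜 (∀ i, Y i) (@Pi.topologicalSpace ι Y t)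

/-- The disjoint-union (topological sum) topology on a sigma type. -/
def sigmaTop {ι : Type v} (Y : ι → Type w) (t : ∀ i, TopologicalSpace (Y i)) :
    TopologicalSpace (Σ i, Y i) :=
  ⨆ i, TopologicalSpace.coinduced (Sigma.mk i) (t i)

/-- An AD-class in `𝒜`: a subclass of `𝒜` closed under homeomorphic copies, closed
under topological sums of arbitrary families of its members, and divisible in `𝒜`
(quotients in `𝒜` of members of `ℬ` belong to `ℬ`). -/
structure IsADClass (𝒜 ℬ : SpaceClass.{u}) : Prop where
  subset : ∀ (X : Type u) (tX : TopologicalSpace X), ℬ X tX → 𝒜 X tX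
  homeo : ClosedUnderHomeo ℬ
  sums : ∀ (ι : Type u) (Y : ι → Type u) (t : ∀ i, TopologicalSpace (Y i)),
    (∀ i, ℬ (Y i) (t i)) → ℬ (Σ i, Y i) (sigmaTop Y t)
  divisible : ∀ (X Z : Type u) (tX : TopologicalSpace X) (tZ : TopologicalSpace Z)
    (q : X → Z), ℬ X tX → 𝒜 Z tZ → @IsQuotientMap X Z tX tZ q → ℬ Z tZ

/-- A class is hereditary if every nonempty subspace of each member belongs to it. -/
def IsHereditary (ℬ : SpaceClass.{u}) : Prop :=
  ∀ (X : Type u) (tX : TopologicalSpace X) (s : Set X), s.Nonempty → ℬ X tX →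
    ℬ s (TopologicalSpace.induced (Subtype.val : s → X) tX)

/-- The prime factor `X_a`: the topology on the underlying set of `X` whose open sets
are exactly the sets `U` such that `a ∈ U` implies `U` is a neighbourhood of `a`. -/
def primeFactor {X : Type u} (t : TopologicalSpace X) (a : X) : TopologicalSpace X where
  IsOpen U := a ∈ U → U ∈ @nhds X t a
  isOpen_univ := fun _ => Filter.univ_mem
  isOpen_inter := fun U V hU hV h => Filter.inter_mem (hU h.1) (hV h.2)
  isOpen_sUnion := fun S hS h => by
    obtain ⟨U, hU, haU⟩ := h
    exact Filter.mem_of_superset (hS U hU haU) (Set.subset_sUnion_of_mem hU)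

/-- A prime space: a topological space with exactly one non-isolated point. -/
def IsPrimeSpace (X : Type u) (t : TopologicalSpace X) : Prop :=
  ∃! a : X, ¬ @IsOpen X t {a}

lemma isOpen_sigmaTop {ι : Type v} {Y : ι → Type w} {t : ∀ i, TopologicalSpace (Y i)}
    {s : Set (Σ i, Y i)} :
    IsOpen[sigmaTop Y t] s ↔ ∀ i, IsOpen[t i] (Sigma.mk i ⁻¹' s) := by
  exact (isOpen_iSup_iff).trans (forall_congr' fun i => isOpen_coinduced)

lemma continuous_from_sigmaTop {ι : Type v} {Y : ι → Type w} {t : ∀ i, TopologicalSpace (Y i)}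
    {Z : Type*} (tZ : TopologicalSpace Z) (f : (Σ i, Y i) → Z)
    (h : ∀ i, @Continuous _ _ (t i) tZ (fun x => f ⟨i, x⟩)) :
    @Continuous _ _ (sigmaTop Y t) tZ f := by
  rw [@continuous_def _ _ (sigmaTop Y t) tZ]
  intro s hs
  rw [isOpen_sigmaTop]
  intro i
  exact (h i).isOpen_preimage s hs

lemma prime_isOpen {Z : Type*} (tZ : TopologicalSpace Z) (c : Z)
    (hiso : ∀ x : Z, x ≠ c → IsOpen[tZ] {x}) (s : Set Z)
    (h : c ∈ s → s ∈ @nhds Z tZ c) : IsOpen[tZ] s := by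
  letI := tZ
  rw [isOpen_iff_mem_nhds]
  intro x hx
  by_cases hxc : x = c
  · subst hxc; exact h hx
  · exact Filter.mem_of_superset ((hiso x hxc).mem_nhds rfl)
      (by intro y hy; rwa [Set.mem_singleton_iff.mp hy])

lemma embedA {𝒜 : SpaceClass.{u}} (hA : IsEpireflectiveClass 𝒜) {Z W : Type u}
    (tZ : TopologicalSpace Z) (tW : TopologicalSpace W) (hW : 𝒜 W tW)
    (e : Z → W) (hinj : Function.Injective e)
    (hind : tZ = TopologicalSpace.induced e tW) : 𝒜 Z tZ := by
  have hsub := hA.subspace W tW (Set.range e) hW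
  refine hA.homeo _ _ _ _ ⟨?_⟩ hsub
  letI : TopologicalSpace Z := tZ
  letI : TopologicalSpace (Set.range e) := TopologicalSpace.induced Subtype.val tW
  refine Homeomorph.mk (Equiv.ofInjective e hinj).symm ?_ ?_
  · show Continuous ⇑(Equiv.ofInjective e hinj).symm
    rw [continuous_iff_le_induced]
    have : TopologicalSpace.induced (⇑(Equiv.ofInjective e hinj).symm) tZ =
        TopologicalSpace.induced (⇑(Equiv.ofInjective e hinj).symm)
          (TopologicalSpace.induced e tW) := by rw [← hind]
    rw [this, induced_compose]
    have he : (e ∘ ⇑(Equiv.ofInjective e hinj).symm) = (Subtype.val : Set.range e → W) := by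
      funext x; exact Equiv.apply_ofInjective_symm hinj x
    rw [he]
  · show Continuous ⇑(Equiv.ofInjective e hinj)
    rw [continuous_iff_le_induced, induced_compose]
    have he : ((Subtype.val : Set.range e → W) ∘ ⇑(Equiv.ofInjective e hinj)) = e := by
      funext x; rfl
    rw [he]
    exact le_of_eq hind

/-- Case I: if `𝒜` contains a "Sierpiński-like" pair then every space with
the T0-separation property is in `𝒜`. -/
lemma classA_of_T0 {𝒜 : SpaceClass.{u}} (hA : IsEpireflectiveClass 𝒜)
    (hT0 : ∀ (Z : Type u) (tZ : TopologicalSpace Z), 𝒜 Z tZ → @T0Space Z tZ)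
    {σ : Type u} (tσ : TopologicalSpace σ) (hσ : 𝒜 σ tσ) (uu vv : σ) (huvne : uu ≠ vv)
    (huv : ∀ O : Set σ, IsOpen[tσ] O → uu ∈ O → vv ∈ O)
    {Z : Type u} (tZ : TopologicalSpace Z)
    (hZ : ∀ x y : Z, x ≠ y → ∃ O : Set Z, IsOpen[tZ] O ∧ ¬(x ∈ O ↔ y ∈ O)) :
    𝒜 Z tZ := by
  classical
  letI : TopologicalSpace σ := tσ
  haveI : T0Space σ := hT0 σ tσ hσ
  obtain ⟨W, hWo, hWx⟩ := exists_isOpen_xor'_mem huvne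
  have hWv : vv ∈ W ∧ uu ∉ W := by
    rcases hWx with ⟨hu, hv⟩ | ⟨hv, hu⟩
    · exact absurd (huv W hWo hu) hv
    · exact ⟨hv, hu⟩
  set e : Z → (Set Z → σ) := fun z A => if z ∈ A ∧ IsOpen[tZ] A then vv else uu with he
  have hPi : 𝒜 (Set Z → σ) (@Pi.topologicalSpace (Set Z) (fun _ => σ) (fun _ => tσ)) :=
    hA.prod (Set Z) (fun _ => σ) (fun _ => tσ) (fun _ => hσ)
  apply embedA hA tZ _ hPi e ?_ ?_
  · -- injective
    intro x y hxy
    by_contra hne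
    obtain ⟨O, hO, hOx⟩ := hZ x y hne
    apply hOx
    have := congrFun hxy O
    simp only [he] at this
    constructor
    · intro hx
      by_contra hy
      rw [if_pos ⟨hx, hO⟩, if_neg (fun hc => hy hc.1)] at this
      exact huvne this.symm
    · intro hy
      by_contra hx
      rw [if_neg (fun hc => hx hc.1), if_pos ⟨hy, hO⟩] at this
      exact huvne this
  · -- topology is induced
    refine le_antisymm ?_ ?_
    · -- tZ ≤ induced, i.e. e is continuous
      rw [← continuous_iff_le_induced]
      letI : TopologicalSpace Z := tZ
      apply continuous_pi
      intro A
      by_cases hA' : IsOpen A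
      · rw [continuous_def]
        intro W' hW'
        by_cases hv' : vv ∈ W' <;> by_cases hu' : uu ∈ W'
        · have : (fun z => e z A) ⁻¹' W' = Set.univ := by
            ext z; simp only [Set.mem_preimage, Set.mem_univ, iff_true, he]
            split <;> assumption
          rw [this]; exact isOpen_univ
        · have : (fun z => e z A) ⁻¹' W' = A := by
            ext z; simp only [Set.mem_preimage, he]
            constructor
            · intro hz; by_contra hzA
              rw [if_neg (fun hc => hzA hc.1)] at hz; exact hu' hz
            · intro hz; rw [if_pos ⟨hz, hA'⟩]; exact hv'
          rw [this]; exact hA'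
        · exact absurd (huv W' hW' hu') hv'
        · have : (fun z => e z A) ⁻¹' W' = ∅ := by
            ext z; simp only [Set.mem_preimage, Set.mem_empty_iff_false, iff_false]
            intro hz; simp only [he] at hz; split at hz
            · exact hv' hz
            · exact hu' hz
          rw [this]; exact isOpen_empty
      · have : (fun z => e z A) = fun _ => uu := by
          funext z; simp only [he]; rw [if_neg (fun hc => hA' hc.2)]
        rw [this]; exact continuous_const
    · -- induced ≤ tZ
      rw [TopologicalSpace.le_def]
      intro O hO
      rw [@isOpen_induced_iff _ _ _ _ e]
      letI : TopologicalSpace Z := tZ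
      refine ⟨(fun f : Set Z → σ => f O) ⁻¹' W, (continuous_apply (A := fun _ : Set Z => σ) O).isOpen_preimage W hWo, ?_⟩
      · ext z
        simp only [Set.mem_preimage, Set.mem_setOf_eq, he]
        constructor
        · intro hz
          by_contra hzO
          rw [if_neg (fun hc => hzO hc.1)] at hz
          exact hWv.2 hz
        · intro hz
          rw [if_pos ⟨hz, hO⟩]
          exact hWv.1

/-- Case II: every "prime-shaped" space whose singletons (other than `c`) are open
and have open complements embeds into a power of a two-point discrete member of `𝒜`. -/
lemma classA_prime {𝒜 : SpaceClass.{u}} (hA : IsEpireflectiveClass 𝒜)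
    {D : Type u} (tD : TopologicalSpace D) (hD : 𝒜 D tD) (d0 d1 : D) (hdne : d0 ≠ d1)
    (hdisc : ∀ s : Set D, IsOpen[tD] s)
    {S : Type u} (tS : TopologicalSpace S) (c : S)
    (hiso : ∀ x : S, x ≠ c → IsOpen[tS] {x})
    (hcompl : ∀ x : S, x ≠ c → IsOpen[tS] {x}ᶜ) :
    𝒜 S tS := by
  classical
  letI : TopologicalSpace S := tS
  letI : TopologicalSpace D := tD
  have hnhdsD : ∀ d : D, 𝓝 d = pure d := fun d =>
    le_antisymm (Filter.le_pure_iff.mpr ((hdisc {d}).mem_nhds rfl)) (pure_le_nhds d)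
  set Act : Set S → Prop := fun A => A ∈ 𝓝 c ∨ ∃ s : S, s ≠ c ∧ A = {s} with hAct
  set e : S → (Set S → D) := fun x A => if x ∈ A ∧ Act A then d1 else d0 with he
  have hPi : 𝒜 (Set S → D) (@Pi.topologicalSpace (Set S) (fun _ => D) (fun _ => tD)) :=
    hA.prod (Set S) (fun _ => D) (fun _ => tD) (fun _ => hD)
  apply embedA hA tS _ hPi e ?_ ?_
  · -- injective
    intro x y hxy
    by_contra hne
    by_cases hx : x = c
    · have hy : y ≠ c := fun h => hne (hx.trans h.symm)
      have hco := congrFun hxy {y}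
      simp only [he] at hco
      rw [if_neg (fun hcond => hne (Set.mem_singleton_iff.mp hcond.1)),
        if_pos ⟨rfl, Or.inr ⟨y, hy, rfl⟩⟩] at hco
      exact hdne hco
    · have hco := congrFun hxy {x}
      simp only [he] at hco
      rw [if_pos ⟨rfl, Or.inr ⟨x, hx, rfl⟩⟩,
        if_neg (fun hcond => hne (Set.mem_singleton_iff.mp hcond.1).symm)] at hco
      exact hdne hco.symm
  · refine le_antisymm ?_ ?_
    · -- continuity of e
      rw [← continuous_iff_le_induced]
      apply continuous_pi
      intro A
      rw [continuous_iff_continuousAt]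
      intro x
      by_cases hxc : x = c
      · subst hxc
        unfold ContinuousAt
        rw [hnhdsD, Filter.tendsto_pure]
        by_cases h1 : A ∈ 𝓝 x
        · have hcA : x ∈ A := mem_of_mem_nhds h1
          filter_upwards [h1] with y hy
          show e y A = e x A
          simp only [he]
          rw [if_pos ⟨hy, Or.inl h1⟩, if_pos ⟨hcA, Or.inl h1⟩]
        · by_cases h2 : ∃ s : S, s ≠ x ∧ A = {s}
          · obtain ⟨s, hs, rfl⟩ := h2
            have hmem : ({s}ᶜ : Set S) ∈ 𝓝 x :=
              (hcompl s hs).mem_nhds (fun h => hs (Set.mem_singleton_iff.mp h).symm)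
            filter_upwards [hmem] with y hy
            show e y {s} = e x {s}
            simp only [he]
            rw [if_neg (fun hcond => hy hcond.1),
              if_neg (fun hcond => hs (Set.mem_singleton_iff.mp hcond.1).symm)]
          · have hall : ∀ y, e y A = d0 := fun y =>
              if_neg (fun hcond => hcond.2.elim h1 h2)
            filter_upwards with y
            show e y A = e x A
            rw [hall y, hall x]
      · unfold ContinuousAt
        have : 𝓝 x = pure x :=
          le_antisymm (Filter.le_pure_iff.mpr ((hiso x hxc).mem_nhds rfl)) (pure_le_nhds x)
        rw [this]
        exact tendsto_pure_nhds _ x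
    · -- induced ≤ tS
      rw [TopologicalSpace.le_def]
      intro O hO
      rw [@isOpen_induced_iff _ _ _ _ e]
      by_cases hc : c ∈ O
      · refine ⟨(fun f : Set S → D => f O) ⁻¹' {d1},
          (continuous_apply O).isOpen_preimage _ (hdisc _), ?_⟩
        ext x
        simp only [Set.mem_preimage, Set.mem_singleton_iff, he]
        constructor
        · intro hx
          by_contra hxO
          rw [if_neg (fun hcond => hxO hcond.1)] at hx
          exact hdne hx
        · intro hx
          rw [if_pos ⟨hx, Or.inl (hO.mem_nhds hc)⟩]
      · refine ⟨⋃ x ∈ O, (fun f : Set S → D => f {x}) ⁻¹' {d1}, ?_, ?_⟩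
        · exact isOpen_biUnion fun x _ => (continuous_apply {x}).isOpen_preimage _ (hdisc _)
        · ext y
          simp only [Set.mem_preimage, Set.mem_iUnion, Set.mem_singleton_iff, he]
          constructor
          · rintro ⟨x, hxO, hxy⟩
            by_cases hyx : y ∈ ({x} : Set S)
            · rwa [Set.mem_singleton_iff.mp hyx]
            · rw [if_neg (fun hcond => hyx hcond.1)] at hxy
              exact absurd hxy hdne
          · intro hy
            refine ⟨y, hy, ?_⟩
            rw [if_pos ⟨rfl, Or.inr ⟨y, fun h => hc (h ▸ hy), rfl⟩⟩]

namespace S5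
open scoped Classical

variable {X B : Type u}

def Astar (a : X) (Us : Set X) : Set X := insert a Usᶜ

def ayp (a : X) (Us : Set X) : ↥(Astar a Us) := ⟨a, Set.mem_insert _ _⟩

abbrev FrT (a : X) (Us : Set X) (b : B) : Type u :=
  {z : ↥(Astar a Us) // z ≠ ayp a Us} × {w : B // w ≠ b}

abbrev CG2 (a : X) (Us : Set X) (b : B) : Type u := ↥(Astar a Us) ⊕ FrT a Us b

@[reducible] def famG (a : X) (Us : Set X) (b : B) :
    Option {z : ↥(Astar a Us) // z ≠ ayp a Us} → Type u
  | none => ↥(Astar a Us)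
  | some _ => B

def tfamG (tX : TopologicalSpace X) (tB : TopologicalSpace B) (a : X) (Us : Set X) (b : B) :
    ∀ o, TopologicalSpace (famG a Us b o)
  | none => TopologicalSpace.induced (Subtype.val : ↥(Astar a Us) → X) tX
  | some _ => tB

noncomputable def qG (a : X) (Us : Set X) (b : B) : (Σ o, famG a Us b o) → CG2 a Us b
  | ⟨none, s⟩ => Sum.inl s
  | ⟨some z, w⟩ => if h : w = b then Sum.inl z.1 else Sum.inr ⟨z, ⟨w, h⟩⟩

noncomputable def tCG2 (tX : TopologicalSpace X) (tB : TopologicalSpace B) (a : X) (Us : Set X) (b : B) :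
    TopologicalSpace (CG2 a Us b) :=
  TopologicalSpace.coinduced (qG a Us b) (sigmaTop _ (tfamG tX tB a Us b))

def projX (a : X) (Us : Set X) (b : B) : CG2 a Us b → X :=
  Sum.elim (fun s => s.1) (fun m => m.1.1.1)

def Mset (a : X) (Us : Set X) (b : B) : Set (CG2 a Us b) :=
  insert (Sum.inl (ayp a Us)) (Set.range Sum.inr)

def ayq (a : X) (Us : Set X) (b : B) : ↥(Mset a Us b) :=
  ⟨Sum.inl (ayp a Us), Set.mem_insert _ _⟩

noncomputable def tQU (tX : TopologicalSpace X) (tB : TopologicalSpace B) (a : X) (Us : Set X) (b : B) :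
    TopologicalSpace ↥(Mset a Us b) :=
  TopologicalSpace.induced Subtype.val (tCG2 tX tB a Us b)

def hUm (a : X) (Us : Set X) (b : B) : ↥(Mset a Us b) → X := fun p => projX a Us b p.1

variable (tX : TopologicalSpace X) (tB : TopologicalSpace B) (a : X) (Us : Set X) (b : B)

lemma qG_some_b (z : {z : ↥(Astar a Us) // z ≠ ayp a Us}) :
    qG a Us b ⟨some z, b⟩ = Sum.inl z.1 := dif_pos rfl

lemma qG_some_ne (z : {z : ↥(Astar a Us) // z ≠ ayp a Us}) (w : B) (h : w ≠ b) :
    qG a Us b ⟨some z, w⟩ = Sum.inr ⟨z, ⟨w, h⟩⟩ := dif_neg h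

lemma projX_qG_some (z : {z : ↥(Astar a Us) // z ≠ ayp a Us}) (w : B) :
    projX a Us b (qG a Us b ⟨some z, w⟩) = z.1.1 := by
  by_cases h : w = b
  · subst h; rw [qG_some_b]; rfl
  · rw [qG_some_ne a Us b z w h]; rfl

lemma isOpen_tCG2 {s : Set (CG2 a Us b)} :
    IsOpen[tCG2 tX tB a Us b] s ↔
      (IsOpen[TopologicalSpace.induced (Subtype.val : ↥(Astar a Us) → X) tX]
        (Sum.inl ⁻¹' s) ∧
      ∀ z, IsOpen[tB] ((fun w => qG a Us b ⟨some z, w⟩) ⁻¹' s)) := by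
  show IsOpen[sigmaTop _ (tfamG tX tB a Us b)] (qG a Us b ⁻¹' s) ↔ _
  rw [isOpen_sigmaTop, Option.forall]
  exact Iff.rfl

lemma CG2_open_of (hbiso : ∀ w : B, w ≠ b → IsOpen[tB] {w}) (s : Set (CG2 a Us b))
    (h1 : IsOpen[TopologicalSpace.induced (Subtype.val : ↥(Astar a Us) → X) tX]
      (Sum.inl ⁻¹' s))
    (h2 : ∀ z, Sum.inl z.1 ∈ s → ((fun w => qG a Us b ⟨some z, w⟩) ⁻¹' s) ∈ @nhds B tB b) :
    IsOpen[tCG2 tX tB a Us b] s := by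
  rw [isOpen_tCG2]
  refine ⟨h1, fun z => prime_isOpen tB b hbiso _ (fun hbm => h2 z ?_)⟩
  have := qG_some_b a Us b z
  rw [Set.mem_preimage] at hbm
  rwa [this] at hbm

lemma fresh_singleton_open (hbiso : ∀ w : B, w ≠ b → IsOpen[tB] {w}) (m : FrT a Us b) :
    IsOpen[tCG2 tX tB a Us b] {Sum.inr m} := by
  letI := tX
  apply CG2_open_of tX tB a Us b hbiso
  · have h : (Sum.inl ⁻¹' ({Sum.inr m} : Set (CG2 a Us b))) = ∅ := by
      ext s; simp
    rw [h]
    exact isOpen_empty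
  · intro z hz
    simp at hz

lemma isOpen_projX_preimage (hbiso : ∀ w : B, w ≠ b → IsOpen[tB] {w})
    (V : Set X) (hV : IsOpen[tX] V) :
    IsOpen[tCG2 tX tB a Us b] (projX a Us b ⁻¹' V) := by
  letI := tX
  letI := tB
  apply CG2_open_of tX tB a Us b hbiso
  · exact isOpen_induced_iff.mpr ⟨V, hV, rfl⟩
  · intro z hz
    have hzV : z.1.1 ∈ V := hz
    refine Filter.mem_of_superset Filter.univ_mem ?_
    intro w _
    simp only [Set.mem_preimage]
    rw [projX_qG_some]
    exact hzV

lemma mem_Mset_elim {p : CG2 a Us b} (hp : p ∈ Mset a Us b) :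
    p = Sum.inl (ayp a Us) ∨ ∃ m, p = Sum.inr m := by
  rcases hp with h | h
  · exact Or.inl h
  · obtain ⟨m, hm⟩ := h
    exact Or.inr ⟨m, hm.symm⟩

lemma fresh_val_not_mem (ha : a ∈ Us) (m : FrT a Us b) : m.1.1.1 ∉ Us := by
  have h2 := m.1.1.2
  rcases h2 with h | h
  · exact absurd (Subtype.ext h : m.1.1 = ayp a Us) m.1.2
  · exact h

lemma QU_open_of_no_ay (hbiso : ∀ w : B, w ≠ b → IsOpen[tB] {w})
    (S : Set ↥(Mset a Us b)) (hS : ayq a Us b ∉ S) :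
    IsOpen[tQU tX tB a Us b] S := by
  letI := tX
  letI := tCG2 tX tB a Us b
  rw [tQU, isOpen_induced_iff]
  refine ⟨{p : CG2 a Us b | ∃ h : p ∈ Mset a Us b, (⟨p, h⟩ : ↥(Mset a Us b)) ∈ S}, ?_, ?_⟩
  · apply CG2_open_of tX tB a Us b hbiso
    · have h : (Sum.inl ⁻¹'
          {p : CG2 a Us b | ∃ h : p ∈ Mset a Us b, (⟨p, h⟩ : ↥(Mset a Us b)) ∈ S}) = ∅ := by
        ext s
        simp only [Set.mem_preimage, Set.mem_setOf_eq, Set.mem_empty_iff_false, iff_false]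
        rintro ⟨hmem, hmemS⟩
        rcases mem_Mset_elim a Us b hmem with h | ⟨m, hm⟩
        · have hs : s = ayp a Us := Sum.inl.inj h
          have hq : ayq a Us b = ⟨Sum.inl s, hmem⟩ := Subtype.ext (show Sum.inl (ayp a Us) = Sum.inl s by rw [hs])
          rw [hq] at hS
          exact hS hmemS
        · exact absurd hm Sum.inl_ne_inr
      rw [h]
      exact isOpen_empty
    · intro z hz
      obtain ⟨hmem, _⟩ := hz
      rcases mem_Mset_elim a Us b hmem with h | ⟨m, hm⟩
      · exact absurd (Sum.inl.inj h) z.2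
      · exact absurd hm Sum.inl_ne_inr
  · ext p
    simp only [Set.mem_preimage, Set.mem_setOf_eq]
    constructor
    · rintro ⟨h, hs⟩
      have hq : (⟨p.1, h⟩ : ↥(Mset a Us b)) = p := Subtype.ext rfl
      rwa [hq] at hs
    · intro hp
      refine ⟨p.2, ?_⟩
      have hq : (⟨p.1, p.2⟩ : ↥(Mset a Us b)) = p := Subtype.ext rfl
      rwa [hq]

lemma ay_not_isolated (hbno : ¬ IsOpen[tB] {b}) (haU : a ∈ Us)
    (hUs : Us ∉ @nhds X tX a) :
    ¬ IsOpen[tQU tX tB a Us b] {ayq a Us b} := by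
  letI := tX
  letI := tB
  letI : TopologicalSpace (CG2 a Us b) := tCG2 tX tB a Us b
  intro hop
  rw [tQU, isOpen_induced_iff] at hop
  obtain ⟨O, hO, hpre⟩ := hop
  rw [isOpen_tCG2] at hO
  obtain ⟨h1, h2⟩ := hO
  rw [isOpen_induced_iff] at h1
  obtain ⟨W, hW, hWpre⟩ := h1
  have hayO : Sum.inl (ayp a Us) ∈ O := by
    have h : ayq a Us b ∈ Subtype.val ⁻¹' O := by rw [hpre]; rfl
    exact h
  have haW : a ∈ W := by
    have h : ayp a Us ∈ Subtype.val ⁻¹' W := by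
      rw [hWpre]; exact hayO
    exact h
  have hWU : W ⊆ Us := by
    intro x hx
    by_contra hxU
    have hxA : x ∈ Astar a Us := Set.mem_insert_of_mem _ hxU
    have hxa : x ≠ a := fun h => hxU (h ▸ haU)
    have hs₀O : Sum.inl (⟨x, hxA⟩ : ↥(Astar a Us)) ∈ O := by
      have h : (⟨x, hxA⟩ : ↥(Astar a Us)) ∈ Subtype.val ⁻¹' W := hx
      rw [hWpre] at h
      exact h
    have hs₀ne : (⟨x, hxA⟩ : ↥(Astar a Us)) ≠ ayp a Us :=
      fun h => hxa (congrArg Subtype.val h)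
    set z₀ : {z : ↥(Astar a Us) // z ≠ ayp a Us} := ⟨⟨x, hxA⟩, hs₀ne⟩ with hz₀
    have hbP : b ∈ (fun w => qG a Us b ⟨some z₀, w⟩) ⁻¹' O := by
      simp only [Set.mem_preimage]
      rw [qG_some_b]
      exact hs₀O
    have hPb : ¬ ((fun w => qG a Us b ⟨some z₀, w⟩) ⁻¹' O ⊆ {b}) := by
      intro hsub
      have heq : (fun w => qG a Us b ⟨some z₀, w⟩) ⁻¹' O = {b} :=
        Set.Subset.antisymm hsub
          (by intro w hw; rw [Set.mem_singleton_iff.mp hw]; exact hbP)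
      exact hbno (heq ▸ h2 z₀)
    obtain ⟨w, hwO, hwb⟩ := Set.not_subset.mp hPb
    have hwb' : w ≠ b := fun h => hwb (Set.mem_singleton_iff.mpr h)
    rw [Set.mem_preimage, qG_some_ne a Us b z₀ w hwb'] at hwO
    have hm2 : (Sum.inr ⟨z₀, ⟨w, hwb'⟩⟩ : CG2 a Us b) ∈ Mset a Us b :=
      Set.mem_insert_of_mem _ ⟨_, rfl⟩
    have hmem : (⟨Sum.inr ⟨z₀, ⟨w, hwb'⟩⟩, hm2⟩ : ↥(Mset a Us b)) ∈ Subtype.val ⁻¹' O := hwO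
    rw [hpre] at hmem
    have hval : (Sum.inr ⟨z₀, ⟨w, hwb'⟩⟩ : CG2 a Us b) = Sum.inl (ayp a Us) :=
      congrArg Subtype.val (Set.mem_singleton_iff.mp hmem)
    exact Sum.inr_ne_inl hval
  exact hUs (Filter.mem_of_superset (hW.mem_nhds haW) hWU)

lemma hUm_preimage_open (hbiso : ∀ w : B, w ≠ b → IsOpen[tB] {w}) (haU : a ∈ Us)
    (U' : Set X) (hpf : a ∈ U' → U' ∈ @nhds X tX a) :
    IsOpen[tQU tX tB a Us b] (hUm a Us b ⁻¹' U') := by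
  letI := tX
  letI : TopologicalSpace (CG2 a Us b) := tCG2 tX tB a Us b
  letI : TopologicalSpace ↥(Mset a Us b) := tQU tX tB a Us b
  by_cases ha' : a ∈ U'
  · obtain ⟨V, hVsub, hVopen, haV⟩ := mem_nhds_iff.mp (hpf ha')
    have hsub : (hUm a Us b ⁻¹' V) ⊆ (hUm a Us b ⁻¹' U') := fun p hp => hVsub hp
    rw [← Set.union_diff_cancel hsub]
    apply IsOpen.union
    · have h : IsOpen[tQU tX tB a Us b] (hUm a Us b ⁻¹' V) := by
        rw [tQU, isOpen_induced_iff]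
        exact ⟨projX a Us b ⁻¹' V, isOpen_projX_preimage tX tB a Us b hbiso V hVopen, rfl⟩
      exact h
    · apply QU_open_of_no_ay tX tB a Us b hbiso
      intro hmem
      exact hmem.2 (show hUm a Us b (ayq a Us b) ∈ V from haV)
  · apply QU_open_of_no_ay tX tB a Us b hbiso
    intro hmem
    exact ha' (hmem : hUm a Us b (ayq a Us b) ∈ U')

def tOFr (tB : TopologicalSpace B) (a : X) (Us : Set X) (b : B) :
    TopologicalSpace (Option (FrT a Us b)) where
  IsOpen A := none ∈ A → ∀ z : {z : ↥(Astar a Us) // z ≠ ayp a Us},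
    {w : B | ∀ h : w ≠ b, some (⟨z, ⟨w, h⟩⟩ : FrT a Us b) ∈ A} ∈ @nhds B tB b
  isOpen_univ := fun _ z => Filter.univ_mem' (fun w _ => trivial)
  isOpen_inter := by
    intro A A' hA hA' hnone z
    refine Filter.mem_of_superset
      (Filter.inter_mem (hA hnone.1 z) (hA' hnone.2 z)) ?_
    intro w hw h
    exact ⟨hw.1 h, hw.2 h⟩
  isOpen_sUnion := by
    intro C hC hnone
    obtain ⟨A, hAC, hnA⟩ := hnone
    intro z
    refine Filter.mem_of_superset (hC A hAC hnA z) ?_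
    intro w hw h
    exact ⟨A, hAC, hw h⟩

def q0 (a : X) (Us : Set X) (b : B) : CG2 a Us b → Option (FrT a Us b) :=
  Sum.elim (fun _ => none) (fun m => some m)

def FamJ (a : X) (Us : Set X) (b : B) (D : Type u) :
    Option (Option (FrT a Us b)) → Type u
  | none => ↥(Astar a Us)
  | some none => Option (FrT a Us b)
  | some (some _) => D

def tFamJ (tX : TopologicalSpace X) (tB : TopologicalSpace B) (a : X) (Us : Set X) (b : B)
    (D : Type u) (tD : TopologicalSpace D) : ∀ j, TopologicalSpace (FamJ a Us b D j)
  | none => TopologicalSpace.induced Subtype.val tX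
  | some none => tOFr tB a Us b
  | some (some _) => tD

noncomputable def eCG (a : X) (Us : Set X) (b : B) (D : Type u) (d0 d1 : D) :
    CG2 a Us b → ∀ j, FamJ a Us b D j :=
  fun p j => match j with
  | none => Sum.elim (fun s => s) (fun m => m.1.1) p
  | some none => q0 a Us b p
  | some (some m) => if p = Sum.inr m then d1 else d0

lemma eCG_none (a : X) (Us : Set X) (b : B) (D : Type u) (d0 d1 : D) (p : CG2 a Us b) :
    eCG a Us b D d0 d1 p none = Sum.elim (fun s => s) (fun m => m.1.1) p := rfl

lemma eCG_sn (a : X) (Us : Set X) (b : B) (D : Type u) (d0 d1 : D) (p : CG2 a Us b) :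
    eCG a Us b D d0 d1 p (some none) = q0 a Us b p := rfl

lemma eCG_ssm (a : X) (Us : Set X) (b : B) (D : Type u) (d0 d1 : D) (p : CG2 a Us b)
    (m : FrT a Us b) :
    eCG a Us b D d0 d1 p (some (some m)) = if p = Sum.inr m then d1 else d0 := rfl


lemma frt_eq_w {a : X} {Us : Set X} {b : B} {m m' : FrT a Us b} (h : m = m') :
    m.2.1 = m'.2.1 := by rw [h]

lemma CG2_mem_A_case2 {𝒜 : SpaceClass.{u}} (hA : IsEpireflectiveClass 𝒜)
    (hXA : 𝒜 X tX) {D : Type u} (tD : TopologicalSpace D) (hD : 𝒜 D tD)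
    (d0 d1 : D) (hdne : d0 ≠ d1) (hdisc : ∀ s : Set D, IsOpen[tD] s)
    (hbiso : ∀ w : B, w ≠ b → IsOpen[tB] {w})
    (hT1B : ∀ y : B, IsOpen[tB] {y}ᶜ) :
    𝒜 (CG2 a Us b) (tCG2 tX tB a Us b) := by
  letI := tB
  -- the prime space P₀ is in 𝒜
  have hOFrA : 𝒜 (Option (FrT a Us b)) (tOFr tB a Us b) := by
    apply classA_prime hA tD hD d0 d1 hdne hdisc (tOFr tB a Us b) none
    · intro x hx
      match x, hx with
      | some m, _ =>
        intro hnone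
        exact absurd hnone (by simp)
    · intro x hx
      match x, hx with
      | some m, _ =>
        intro _ z
        refine Filter.mem_of_superset
          ((hT1B m.2.1).mem_nhds (fun hb => m.2.2 ((Set.mem_singleton_iff.mp hb).symm))) ?_
        intro w hw h hc
        have hpair : (⟨z, ⟨w, h⟩⟩ : FrT a Us b) = m := Option.some.inj hc
        exact hw (Set.mem_singleton_iff.mpr (frt_eq_w hpair))
  letI : ∀ j, TopologicalSpace (FamJ a Us b D j) := tFamJ tX tB a Us b D tD
  have hPiA : 𝒜 (∀ j, FamJ a Us b D j) (@Pi.topologicalSpace _ _ (tFamJ tX tB a Us b D tD)) := by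
    apply hA.prod
    intro j
    match j with
    | none => exact hA.subspace X tX (Astar a Us) hXA
    | some none => exact hOFrA
    | some (some m) => exact hD
  apply embedA hA _ _ hPiA (eCG a Us b D d0 d1) ?_ ?_
  · -- injectivity
    intro p p' h
    have h2 := congrFun h (some none)
    match p, p' with
    | Sum.inl s, Sum.inl s' =>
      have h1 : s = s' := congrFun h none
      rw [h1]
    | Sum.inl s, Sum.inr m' => exact (Option.some_ne_none m' (h2 : none = some m').symm).elim
    | Sum.inr m, Sum.inl s' => exact (Option.some_ne_none m (h2 : some m = none)).elim
    | Sum.inr m, Sum.inr m' =>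
      have h1 : m = m' := Option.some.inj (h2 : some m = some m')
      rw [h1]
  · refine le_antisymm ?_ ?_
    · -- continuity of eCG
      rw [← continuous_iff_le_induced]
      letI : TopologicalSpace (Option (FrT a Us b)) := tOFr tB a Us b
      letI : TopologicalSpace D := tD
      letI : TopologicalSpace ↥(Astar a Us) := TopologicalSpace.induced Subtype.val tX
      have hcont : @Continuous _ _ (sigmaTop _ (tfamG tX tB a Us b)) _
          (eCG a Us b D d0 d1 ∘ qG a Us b) := by
        apply continuous_from_sigmaTop
        intro o
        cases o with
        | none =>
          show @Continuous _ _ (TopologicalSpace.induced Subtype.val tX) _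
            (fun s : ↥(Astar a Us) => eCG a Us b D d0 d1 (Sum.inl s))
          apply continuous_pi
          intro j
          match j with
          | none => exact continuous_id
          | some none => exact continuous_const
          | some (some m) =>
            have heq : (fun (s : ↥(Astar a Us)) =>
                eCG a Us b D d0 d1 (Sum.inl s) (some (some m))) = fun _ => d0 := by
              funext s
              rw [eCG_ssm, if_neg (fun hc => Sum.inl_ne_inr hc)]
            show Continuous (fun (s : ↥(Astar a Us)) =>
                eCG a Us b D d0 d1 (Sum.inl s) (some (some m)))
            rw [heq]
            exact continuous_const
        | some z =>
          show @Continuous _ _ tB _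
            (fun w : B => eCG a Us b D d0 d1 (qG a Us b ⟨some z, w⟩))
          apply continuous_pi
          intro j
          match j with
          | none =>
            have heq : (fun (w : B) =>
                eCG a Us b D d0 d1 (qG a Us b ⟨some z, w⟩) none) = fun _ => z.1 := by
              funext w
              by_cases hw : w = b
              · subst hw; rw [qG_some_b]; rfl
              · rw [qG_some_ne a Us b z w hw]; rfl
            show Continuous (fun (w : B) => eCG a Us b D d0 d1 (qG a Us b ⟨some z, w⟩) none)
            rw [heq]
            exact continuous_const
          | some none =>
            show Continuous (fun (w : B) =>
              eCG a Us b D d0 d1 (qG a Us b ⟨some z, w⟩) (some none))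
            rw [continuous_def]
            intro A hA'
            apply prime_isOpen tB b hbiso
            intro hbm
            have hvb : eCG a Us b D d0 d1 (qG a Us b ⟨some z, b⟩) (some none) = none := by
              rw [qG_some_b]; rfl
            have hnone : none ∈ A := by
              rw [Set.mem_preimage, hvb] at hbm
              exact hbm
            refine Filter.mem_of_superset (hA' hnone z) ?_
            intro w hw
            rw [Set.mem_preimage]
            by_cases hwb : w = b
            · subst hwb
              rw [hvb]
              exact hnone
            · have hv : eCG a Us b D d0 d1 (qG a Us b ⟨some z, w⟩) (some none)
                  = some ⟨z, ⟨w, hwb⟩⟩ := by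
                rw [qG_some_ne a Us b z w hwb]; rfl
              rw [hv]
              exact hw hwb
          | some (some m) =>
            show Continuous (fun (w : B) =>
              eCG a Us b D d0 d1 (qG a Us b ⟨some z, w⟩) (some (some m)))
            rw [continuous_def]
            intro W hW
            apply prime_isOpen tB b hbiso
            intro hbm
            have hvb : eCG a Us b D d0 d1 (qG a Us b ⟨some z, b⟩) (some (some m)) = d0 := by
              rw [qG_some_b, eCG_ssm, if_neg (fun hc => Sum.inl_ne_inr hc)]
            have hd0W : d0 ∈ W := by
              rw [Set.mem_preimage, hvb] at hbm
              exact hbm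
            refine Filter.mem_of_superset
              ((hT1B m.2.1).mem_nhds
                (fun hb => m.2.2 ((Set.mem_singleton_iff.mp hb).symm))) ?_
            intro w hw
            rw [Set.mem_preimage]
            have hv : eCG a Us b D d0 d1 (qG a Us b ⟨some z, w⟩) (some (some m)) = d0 := by
              by_cases hwb : w = b
              · subst hwb; exact hvb
              · rw [qG_some_ne a Us b z w hwb, eCG_ssm, if_neg]
                intro hc
                exact hw (Set.mem_singleton_iff.mpr (frt_eq_w (Sum.inr.inj hc)))
            rw [hv]
            exact hd0W
      exact (@continuous_coinduced_dom _ _ _ (qG a Us b) (eCG a Us b D d0 d1)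
        (sigmaTop _ (tfamG tX tB a Us b)) _).mpr hcont
    · -- induced topology is finer
      rw [TopologicalSpace.le_def]
      intro O hO
      obtain ⟨hOY, hcomp⟩ := (isOpen_tCG2 tX tB a Us b).mp hO
      rw [@isOpen_induced_iff _ _ _ _ (eCG a Us b D d0 d1)]
      classical
      set AO : Set (Option (FrT a Us b)) :=
        {o | ∀ m, o = some m → (Sum.inr m ∈ O ∨ m.1.1 ∉ (Sum.inl ⁻¹' O))} with hAOdef
      have hAOopen : IsOpen[tOFr tB a Us b] AO := by
        intro _ z
        by_cases hz : z.1 ∈ (Sum.inl ⁻¹' O)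
        · have hbP : b ∈ (fun w => qG a Us b ⟨some z, w⟩) ⁻¹' O := by
            rw [Set.mem_preimage, qG_some_b]
            exact hz
          refine Filter.mem_of_superset ((hcomp z).mem_nhds hbP) ?_
          intro w hw h m hm
          left
          have hpair : m = (⟨z, ⟨w, h⟩⟩ : FrT a Us b) := Option.some.inj hm.symm
          rw [hpair]
          rw [Set.mem_preimage, qG_some_ne a Us b z w h] at hw
          exact hw
        · refine Filter.univ_mem' ?_
          intro w h m hm
          right
          have hpair : m = (⟨z, ⟨w, h⟩⟩ : FrT a Us b) := Option.some.inj hm.symm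
          rw [hpair]
          exact hz
      refine ⟨(((fun f : ∀ j, FamJ a Us b D j => f none) ⁻¹' (Sum.inl ⁻¹' O)) ∩
          ((fun f : ∀ j, FamJ a Us b D j => f (some none)) ⁻¹' AO)) ∪
          (⋃ m ∈ {m : FrT a Us b | Sum.inr m ∈ O},
            (fun f : ∀ j, FamJ a Us b D j => f (some (some m))) ⁻¹' {d1}), ?_, ?_⟩
      · apply IsOpen.union
        · exact IsOpen.inter
            ((continuous_apply none).isOpen_preimage _ hOY)
            ((continuous_apply (some none)).isOpen_preimage _ hAOopen)
        · exact isOpen_biUnion fun m _ =>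
            (continuous_apply (some (some m))).isOpen_preimage _ (hdisc _)
      · ext p
        simp only [Set.mem_preimage, Set.mem_union, Set.mem_inter_iff, Set.mem_iUnion,
          Set.mem_setOf_eq, Set.mem_singleton_iff, exists_prop]
        constructor
        · rintro (⟨hp1, hp2⟩ | ⟨m, hmO, hpd⟩)
          · match p with
            | Sum.inl s => exact hp1
            | Sum.inr m =>
              rcases hp2 m rfl with h | h
              · exact h
              · exact absurd hp1 h
          · by_cases hpm : p = Sum.inr m
            · rw [hpm]; exact hmO
            · rw [show eCG a Us b D d0 d1 p (some (some m)) = d0 from if_neg hpm] at hpd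
              exact absurd hpd hdne
        · intro hpO
          match p with
          | Sum.inl s =>
            left
            exact ⟨hpO, fun m hm => (Option.some_ne_none m hm.symm).elim⟩
          | Sum.inr m =>
            right
            exact ⟨m, hpO, if_pos rfl⟩

lemma CG2_T0sep (hbiso : ∀ w : B, w ≠ b → IsOpen[tB] {w})
    (hsep : ∀ x y : X, x ≠ y → ∃ W, IsOpen[tX] W ∧ ¬(x ∈ W ↔ y ∈ W)) :
    ∀ p p' : CG2 a Us b, p ≠ p' →
      ∃ O, IsOpen[tCG2 tX tB a Us b] O ∧ ¬(p ∈ O ↔ p' ∈ O) := by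
  intro p p' hne
  match p, p' with
  | Sum.inl s, Sum.inl s' =>
    have hv : s.1 ≠ s'.1 := fun h => hne (congrArg Sum.inl (Subtype.ext h))
    obtain ⟨W, hWo, hWx⟩ := hsep s.1 s'.1 hv
    exact ⟨projX a Us b ⁻¹' W, isOpen_projX_preimage tX tB a Us b hbiso W hWo, hWx⟩
  | Sum.inl s, Sum.inr m =>
    refine ⟨{Sum.inr m}, fresh_singleton_open tX tB a Us b hbiso m, ?_⟩
    intro h
    exact Sum.inl_ne_inr (h.mpr rfl)
  | Sum.inr m, Sum.inl s =>
    refine ⟨{Sum.inr m}, fresh_singleton_open tX tB a Us b hbiso m, ?_⟩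
    intro h
    exact Sum.inl_ne_inr (h.mp rfl)
  | Sum.inr m, Sum.inr m' =>
    have hm : m ≠ m' := fun h => hne (congrArg Sum.inr h)
    refine ⟨{Sum.inr m'}, fresh_singleton_open tX tB a Us b hbiso m', ?_⟩
    intro h
    exact hm (Sum.inr.inj (h.mpr rfl))

end S5

/-- A hereditary AD-class `ℬ` (in an epireflective class `𝒜` of T0
spaces containing a space with two points) containing at least one prime space is
closed under prime factors. -/
theorem statement5 (𝒜 ℬ : SpaceClass.{u})
    (hA : IsEpireflectiveClass 𝒜)
    (hT0 : ∀ (X : Type u) (tX : TopologicalSpace X), 𝒜 X tX → @T0Space X tX)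
    (hA2 : ∃ (X : Type u) (tX : TopologicalSpace X), 𝒜 X tX ∧ ∃ x y : X, x ≠ y)
    (hB : IsADClass 𝒜 ℬ)
    (hher : IsHereditary ℬ)
    (hprime : ∃ (P : Type u) (tP : TopologicalSpace P), ℬ P tP ∧ IsPrimeSpace P tP) :
    ∀ (X : Type u) (tX : TopologicalSpace X) (a : X),
      ℬ X tX → ℬ X (primeFactor tX a) := by
  classical
  intro X tX a hX
  obtain ⟨B, tB, hBB, hBprime⟩ := hprime
  obtain ⟨b, hbno, hbuniq⟩ := hBprime
  have hbiso : ∀ w : B, w ≠ b → IsOpen[tB] {w} := fun w hw => by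
    by_contra hno
    exact hw (hbuniq w hno)
  have hXA : 𝒜 X tX := hB.subset X tX hX
  have hBA : 𝒜 B tB := hB.subset B tB hBB
  have hPtB : ℬ ↥({b} : Set B) (TopologicalSpace.induced Subtype.val tB) :=
    hher B tB {b} ⟨b, rfl⟩ hBB
  have hPtdisc : ∀ s : Set ↥({b} : Set B),
      IsOpen[TopologicalSpace.induced (Subtype.val : ↥({b} : Set B) → B) tB] s := by
    intro s
    by_cases hm : (⟨b, rfl⟩ : ↥({b} : Set B)) ∈ s
    · have huniv : s = Set.univ := by
        ext p
        simp only [Set.mem_univ, iff_true]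
        have hp : p = ⟨b, rfl⟩ := Subtype.ext p.2
        rw [hp]; exact hm
      rw [huniv]
      exact @isOpen_univ _ (TopologicalSpace.induced Subtype.val tB)
    · have hemp : s = ∅ := by
        ext p
        simp only [Set.mem_empty_iff_false, iff_false]
        intro hp
        have hpe : p = ⟨b, rfl⟩ := Subtype.ext p.2
        exact hm (hpe ▸ hp)
      rw [hemp]
      exact @isOpen_empty _ (TopologicalSpace.induced Subtype.val tB)
  -- two-point discrete space
  have hTTB : ℬ (Σ _ : ULift.{u} Bool, ↥({b} : Set B))
      (sigmaTop _ (fun _ => TopologicalSpace.induced Subtype.val tB)) :=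
    hB.sums (ULift Bool) _ _ (fun _ => hPtB)
  have hTTA : 𝒜 (Σ _ : ULift.{u} Bool, ↥({b} : Set B))
      (sigmaTop _ (fun _ => TopologicalSpace.induced Subtype.val tB)) :=
    hB.subset _ _ hTTB
  have hTTdisc : ∀ s : Set (Σ _ : ULift.{u} Bool, ↥({b} : Set B)),
      IsOpen[sigmaTop _ (fun _ => TopologicalSpace.induced Subtype.val tB)] s := by
    intro s
    rw [isOpen_sigmaTop]
    intro i
    exact hPtdisc _
  have hdne : (⟨⟨false⟩, ⟨b, rfl⟩⟩ : Σ _ : ULift.{u} Bool, ↥({b} : Set B)) ≠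
      ⟨⟨true⟩, ⟨b, rfl⟩⟩ := by
    intro h
    have h1 := congrArg Sigma.fst h
    exact Bool.noConfusion (congrArg ULift.down h1)
  -- the 𝒜-membership facts, by the Sierpiński dichotomy
  obtain ⟨hApf, hACG2⟩ : 𝒜 X (primeFactor tX a) ∧
      ∀ Us : Set X, 𝒜 (S5.CG2 a Us b) (S5.tCG2 tX tB a Us b) := by
    by_cases hI : ∃ (σ : Type u) (tσ : TopologicalSpace σ), 𝒜 σ tσ ∧
        ∃ uu vv : σ, uu ≠ vv ∧ ∀ O : Set σ, IsOpen[tσ] O → uu ∈ O → vv ∈ O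
    · obtain ⟨σ, tσ, hσA, uu, vv, huvne, huv⟩ := hI
      have hsep : ∀ x y : X, x ≠ y → ∃ W, IsOpen[tX] W ∧ ¬(x ∈ W ↔ y ∈ W) := by
        intro x y hxy
        letI := tX
        haveI : T0Space X := hT0 X tX hXA
        obtain ⟨W, hWo, hWx⟩ := exists_isOpen_xor'_mem hxy
        refine ⟨W, hWo, ?_⟩
        rcases hWx with ⟨h1, h2⟩ | ⟨h1, h2⟩
        · exact fun hiff => h2 (hiff.mp h1)
        · exact fun hiff => h2 (hiff.mpr h1)
      constructor
      · apply classA_of_T0 hA hT0 tσ hσA uu vv huvne huv (primeFactor tX a)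
        intro x y hxy
        obtain ⟨W, hWo, hWx⟩ := hsep x y hxy
        exact ⟨W, fun hmem => @IsOpen.mem_nhds X tX a W hWo hmem, hWx⟩
      · intro Us
        apply classA_of_T0 hA hT0 tσ hσA uu vv huvne huv (S5.tCG2 tX tB a Us b)
        exact S5.CG2_T0sep tX tB a Us b hbiso hsep
    · have hT1 : ∀ (Z : Type u) (tZ : TopologicalSpace Z), 𝒜 Z tZ →
          ∀ y : Z, IsOpen[tZ] {y}ᶜ := by
        intro Z tZ hZ y
        letI := tZ
        rw [isOpen_iff_mem_nhds]
        intro x hx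
        by_contra hn
        apply hI
        refine ⟨Z, tZ, hZ, x, y, hx, ?_⟩
        intro O hO hxO
        by_contra hyO
        apply hn
        refine Filter.mem_of_superset (hO.mem_nhds hxO) ?_
        intro w hw hwy
        exact hyO ((Set.mem_singleton_iff.mp hwy) ▸ hw)
      constructor
      · apply classA_prime hA _ hTTA _ _ hdne hTTdisc (primeFactor tX a) a
        · intro x hxa
          intro hmem
          exact absurd (Set.mem_singleton_iff.mp hmem).symm hxa
        · intro x hxa
          intro _
          exact @IsOpen.mem_nhds X tX a _ (hT1 X tX hXA x)
            (fun h => hxa (Set.mem_singleton_iff.mp h).symm)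
      · intro Us
        exact S5.CG2_mem_A_case2 tX tB a Us b hA hXA _ hTTA _ _ hdne hTTdisc hbiso
          (hT1 B tB hBA)
  -- ℬ-membership of the glued prime pieces
  have hCG2B : ∀ Us : Set X, ℬ (S5.CG2 a Us b) (S5.tCG2 tX tB a Us b) := by
    intro Us
    apply hB.divisible (Σ o, S5.famG a Us b o) _ (sigmaTop _ (S5.tfamG tX tB a Us b)) _
      (S5.qG a Us b) ?_ (hACG2 Us) ?_
    · apply hB.sums
      intro o
      match o with
      | none => exact hher X tX (S5.Astar a Us) ⟨a, Set.mem_insert _ _⟩ hX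
      | some z => exact hBB
    · have hsurj : Function.Surjective (S5.qG a Us b) := by
        intro p
        match p with
        | Sum.inl s => exact ⟨⟨none, s⟩, rfl⟩
        | Sum.inr m =>
          refine ⟨⟨some m.1, m.2.1⟩, ?_⟩
          rw [S5.qG_some_ne a Us b m.1 m.2.1 m.2.2]
      exact @Topology.IsQuotientMap.mk _ _ (sigmaTop _ (S5.tfamG tX tB a Us b))
        (S5.tCG2 tX tB a Us b) _
          (@Topology.IsCoinducing.mk _ _ (sigmaTop _ (S5.tfamG tX tB a Us b)) (S5.tCG2 tX tB a Us b) _ rfl) hsurj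
  have hQUB : ∀ Us : Set X, ℬ ↥(S5.Mset a Us b) (S5.tQU tX tB a Us b) := fun Us =>
    hher _ _ _ ⟨Sum.inl (S5.ayp a Us), Set.mem_insert _ _⟩ (hCG2B Us)
  -- final assembly: X_a is a quotient of a sum of members of ℬ
  let Bad : Type u := {U : Set X // a ∈ U ∧ U ∉ @nhds X tX a}
  let fam : X ⊕ Bad → Type u := fun i => match i with
    | Sum.inl _ => ↥({b} : Set B)
    | Sum.inr U => ↥(S5.Mset a U.1 b)
  let tfam : ∀ i, TopologicalSpace (fam i) := fun i => match i with
    | Sum.inl _ => TopologicalSpace.induced Subtype.val tB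
    | Sum.inr U => S5.tQU tX tB a U.1 b
  let qF : (Σ i, fam i) → X := fun p => match p with
    | ⟨Sum.inl x, _⟩ => x
    | ⟨Sum.inr U, pp⟩ => S5.hUm a U.1 b pp
  apply hB.divisible (Σ i, fam i) X (sigmaTop fam tfam) (primeFactor tX a) qF ?_ hApf ?_
  · apply hB.sums
    intro i
    match i with
    | Sum.inl x => exact hPtB
    | Sum.inr U => exact hQUB U.1
  · have hsurj : Function.Surjective qF := by
      intro x
      exact ⟨⟨Sum.inl x, ⟨b, rfl⟩⟩, rfl⟩
    refine @Topology.IsQuotientMap.mk _ _ (sigmaTop fam tfam) (primeFactor tX a) _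
      (@Topology.IsCoinducing.mk _ _ (sigmaTop fam tfam) (primeFactor tX a) _ ?_) hsurj
    apply TopologicalSpace.ext
    funext s
    apply propext
    constructor
    · intro hs
      show IsOpen[sigmaTop fam tfam] (qF ⁻¹' s)
      rw [isOpen_sigmaTop]
      intro i
      match i with
      | Sum.inl x => exact hPtdisc _
      | Sum.inr U =>
        exact S5.hUm_preimage_open tX tB a U.1 b hbiso U.2.1 s hs
    · intro hs
      intro ha'
      by_contra hsn
      have hs' : IsOpen[sigmaTop fam tfam] (qF ⁻¹' s) := hs
      have hopen := (isOpen_sigmaTop.mp hs') (Sum.inr ⟨s, ha', hsn⟩)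
      have heq : (Sigma.mk (Sum.inr (⟨s, ha', hsn⟩ : Bad)) ⁻¹' (qF ⁻¹' s)) =
          {S5.ayq a s b} := by
        ext pp
        simp only [Set.mem_preimage, Set.mem_singleton_iff]
        constructor
        · intro hmem
          rcases S5.mem_Mset_elim a s b pp.2 with h | ⟨m, hm⟩
          · exact Subtype.ext h
          · exfalso
            have hval : S5.hUm a s b pp = m.1.1.1 := by
              show S5.projX a s b pp.1 = m.1.1.1
              rw [hm]
              rfl
            rw [show qF ⟨Sum.inr (⟨s, ha', hsn⟩ : Bad), pp⟩ = S5.hUm a s b pp from rfl,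
              hval] at hmem
            exact S5.fresh_val_not_mem a s b ha' m hmem
        · intro h
          rw [show qF ⟨Sum.inr (⟨s, ha', hsn⟩ : Bad), pp⟩ = S5.hUm a s b pp from rfl, h]
          exact ha'
      rw [heq] at hopen
      exact S5.ay_not_isolated tX tB a s b hbno ha' hsn hopen
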